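/- In the serial repair model with n - k = 1 (single-fault tolerance), the transform simplifies to P_c(s) = c_0(s) c_1(s) / (1 - c_0(s) b_1(s)) where c_0(s) = nλ/(s+nλ), c_1(s) = ((n-1)λ/((n-1)λ+s))(1 - e^{-((n-1)λ+s)t_rep}), b_1(s) = e^{-((n-1)λ+s)t_rep}; and the mean time to data loss MTDL = -P_c'(0) equals [1/(nλ) + (1 - e^{-(n-1)λ t_rep})/((n-1)λ)] / (1 - e^{-(n-1)λ t_rep}). -/

import Mathlib

open Real

/-- Single-fault-tolerant serial model (`n - k = 1`): with
`P_c(s) = c_0(s) c_1(s) / (1 - c_0(s) b_1(s))`, the mean time to data loss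
`-P_c'(0)` equals
`[1/(nλ) + (1 - e^{-(n-1)λ t})/((n-1)λ)] / (1 - e^{-(n-1)λ t})`. -/
theorem single_fault_mtdl (n : ℕ) (hn : 2 ≤ n) (lam t_rep : ℝ)
    (hlam : 0 < lam) (ht : 0 < t_rep)
    (c0 c1 b1 : ℝ → ℝ)
    (hc0 : ∀ s : ℝ, c0 s = (n : ℝ) * lam / (s + (n : ℝ) * lam))
    (hc1 : ∀ s : ℝ, c1 s = ((n : ℝ) - 1) * lam / (((n : ℝ) - 1) * lam + s) *
      (1 - Real.exp (-((((n : ℝ) - 1) * lam + s) * t_rep))))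
    (hb1 : ∀ s : ℝ, b1 s = Real.exp (-((((n : ℝ) - 1) * lam + s) * t_rep))) :
    -(deriv (fun s : ℝ => c0 s * c1 s / (1 - c0 s * b1 s)) 0) =
      (1 / ((n : ℝ) * lam) +
          (1 - Real.exp (-(((n : ℝ) - 1) * lam * t_rep))) / (((n : ℝ) - 1) * lam)) /
        (1 - Real.exp (-(((n : ℝ) - 1) * lam * t_rep))) := by
  set a : ℝ := (n : ℝ) * lam with ha_def
  set b : ℝ := ((n : ℝ) - 1) * lam with hb_def
  have hn1 : (1 : ℝ) ≤ (n : ℝ) - 1 := by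
    have : (2 : ℝ) ≤ (n : ℝ) := by exact_mod_cast hn
    linarith
  have ha : 0 < a := by
    have : (0:ℝ) < (n:ℝ) := by positivity
    exact mul_pos this hlam
  have hb : 0 < b := mul_pos (by linarith) hlam
  have he0lt : Real.exp (-(b * t_rep)) < 1 := by
    rw [Real.exp_lt_one_iff]
    nlinarith
  set e0 : ℝ := Real.exp (-(b * t_rep)) with he0_def
  have hD0 : (0:ℝ) < 1 - e0 := by linarith
  -- rewrite the function
  have hfun : (fun s : ℝ => c0 s * c1 s / (1 - c0 s * b1 s)) =
      (fun s : ℝ => a / (s + a) * (b / (b + s) * (1 - Real.exp (-((b + s) * t_rep)))) /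
        (1 - a / (s + a) * Real.exp (-((b + s) * t_rep)))) := by
    funext s; rw [hc0, hc1, hb1]
  rw [hfun]
  -- derivatives of components at 0
  have hexp : HasDerivAt (fun s : ℝ => Real.exp (-((b + s) * t_rep)))
      (Real.exp (-((b + 0) * t_rep)) * (-t_rep)) 0 := by
    have hinner : HasDerivAt (fun s : ℝ => -((b + s) * t_rep)) (-t_rep) 0 := by
      have : HasDerivAt (fun s : ℝ => (b + s) * t_rep) ((0 + 1) * t_rep) 0 := by
        simpa using (((hasDerivAt_const 0 b).add (hasDerivAt_id 0)).mul_const t_rep)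
      simpa using this.fun_neg
    simpa using hinner.exp
  have hu : HasDerivAt (fun s : ℝ => a / (s + a))
      ((0 * (0 + a) - a * 1) / (0 + a) ^ 2) 0 :=
    (hasDerivAt_const 0 a).div ((hasDerivAt_id 0).add_const a) (by positivity)
  have hv : HasDerivAt (fun s : ℝ => b / (b + s))
      ((0 * (b + 0) - b * (0 + 1)) / (b + 0) ^ 2) 0 := by
    have h2 : HasDerivAt (fun s : ℝ => b + s) (0 + 1) 0 := by
      simpa using (hasDerivAt_const 0 b).fun_add (hasDerivAt_id 0)
    exact (hasDerivAt_const 0 b).div h2 (by positivity)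
  have hw : HasDerivAt (fun s : ℝ => 1 - Real.exp (-((b + s) * t_rep)))
      (0 - Real.exp (-((b + 0) * t_rep)) * (-t_rep)) 0 :=
    (hasDerivAt_const 0 1).sub hexp
  have hN : HasDerivAt (fun s : ℝ => a / (s + a) * (b / (b + s) * (1 - Real.exp (-((b + s) * t_rep)))))
      (((0 * (0 + a) - a * 1) / (0 + a) ^ 2) * (b / (b + 0) * (1 - Real.exp (-((b + 0) * t_rep)))) +
        (a / (0 + a)) * (((0 * (b + 0) - b * (0 + 1)) / (b + 0) ^ 2) * (1 - Real.exp (-((b + 0) * t_rep))) +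
          (b / (b + 0)) * (0 - Real.exp (-((b + 0) * t_rep)) * (-t_rep)))) 0 :=
    hu.mul (hv.mul hw)
  have hD : HasDerivAt (fun s : ℝ => 1 - a / (s + a) * Real.exp (-((b + s) * t_rep)))
      (0 - (((0 * (0 + a) - a * 1) / (0 + a) ^ 2) * Real.exp (-((b + 0) * t_rep)) +
        (a / (0 + a)) * (Real.exp (-((b + 0) * t_rep)) * (-t_rep)))) 0 :=
    (hasDerivAt_const 0 1).sub (hu.mul hexp)
  have hD0ne : (1 - a / (0 + a) * Real.exp (-((b + 0) * t_rep))) ≠ 0 := by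
    rw [zero_add, add_zero, div_self (ne_of_gt ha), one_mul]
    exact ne_of_gt hD0
  have hP := hN.fun_div hD hD0ne
  rw [hP.deriv]
  have haa : a / (0 + a) = 1 := by rw [zero_add, div_self (ne_of_gt ha)]
  have hbb : b / (b + 0) = 1 := by rw [add_zero, div_self (ne_of_gt hb)]
  have hE : Real.exp (-((b + 0) * t_rep)) = e0 := by rw [add_zero]
  rw [hE] at *
  rw [haa, hbb]
  field_simp
  ring
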